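/- arXiv:1905.00749 — 3 statements merged into one kernel-verified Lean document; each statement's English description precedes it below -/
import Mathlib

section
/- The function p ↦ log ρ_p(A_1,…,A_N) is convex on (0,∞): for 0 < p_1 < p_2 and λ ∈ (0,1), log ρ_{λp_1+(1−λ)p_2}(A_1,…,A_N) ≤ λ log ρ_{p_1}(A_1,…,A_N) + (1−λ) log ρ_{p_2}(A_1,…,A_N). -/
open Matrix Filter

attribute [local instance] Matrix.linftyOpNormedRing

/-- The product `A_{i_n} ⋯ A_{i_1}` corresponding to a word `i : Fin n → Fin N`. -/
noncomputable def wordProd {d N n : ℕ} (A : Fin N → Matrix (Fin d) (Fin d) ℝ)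
    (i : Fin n → Fin N) : Matrix (Fin d) (Fin d) ℝ :=
  (List.ofFn fun k => A (i (Fin.rev k))).prod

/-- The statement `ρ_p(A) = r`, i.e. `(∑_{|i|=n} ‖A_i‖^p)^{1/n} → r`. -/
def IsPRadius {d N : ℕ} (A : Fin N → Matrix (Fin d) (Fin d) ℝ) (p r : ℝ) : Prop :=
  Tendsto (fun n : ℕ => (∑ i : Fin n → Fin N, ‖wordProd A i‖ ^ p) ^ ((1 : ℝ) / n))
    atTop (nhds r)

/-- `p ↦ log ρ_p(A_1,…,A_N)` is convex on `(0,∞)`. -/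
theorem stmt4 {d N : ℕ} (A : Fin N → Matrix (Fin d) (Fin d) ℝ)
    (p₁ p₂ : ℝ) (hp₁ : 0 < p₁) (hp : p₁ < p₂) (lam : ℝ) (hlam : lam ∈ Set.Ioo (0:ℝ) 1)
    (r₁ r₂ r : ℝ) (hr₁ : IsPRadius A p₁ r₁) (hr₂ : IsPRadius A p₂ r₂)
    (hr : IsPRadius A (lam * p₁ + (1 - lam) * p₂) r)
    (hq : ∀ q : ℝ, 0 ≤ q → ∀ s : ℝ, IsPRadius A q s → 0 < s) :
    Real.log r ≤ lam * Real.log r₁ + (1 - lam) * Real.log r₂ := by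
  obtain ⟨hl0, hl1⟩ := hlam
  have hl1' : 0 < 1 - lam := by linarith
  have hp₂ : 0 < p₂ := hp₁.trans hp
  have hr_pos : 0 < r := hq _ (by positivity) r hr
  have hr₁_pos : 0 < r₁ := hq _ hp₁.le r₁ hr₁
  have hr₂_pos : 0 < r₂ := hq _ hp₂.le r₂ hr₂
  set S₁ : ℕ → ℝ := fun n => ∑ i : Fin n → Fin N, ‖wordProd A i‖ ^ p₁ with hS₁
  set S₂ : ℕ → ℝ := fun n => ∑ i : Fin n → Fin N, ‖wordProd A i‖ ^ p₂ with hS₂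
  set S : ℕ → ℝ := fun n => ∑ i : Fin n → Fin N, ‖wordProd A i‖ ^ (lam * p₁ + (1 - lam) * p₂)
    with hS
  have hS₁n : ∀ n, 0 ≤ S₁ n := fun n => Finset.sum_nonneg fun i _ => by positivity
  have hS₂n : ∀ n, 0 ≤ S₂ n := fun n => Finset.sum_nonneg fun i _ => by positivity
  -- Hölder
  have holder : ∀ n, S n ≤ S₁ n ^ lam * S₂ n ^ (1 - lam) := by
    intro n
    have hconj : Real.HolderConjugate lam⁻¹ (1 - lam)⁻¹ := by
      constructor
      · rw [inv_inv, inv_inv, inv_one]; ring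
      · positivity
      · positivity
    have := Real.inner_le_Lp_mul_Lq_of_nonneg (s := Finset.univ)
      (f := fun i : Fin n → Fin N => ‖wordProd A i‖ ^ (lam * p₁))
      (g := fun i : Fin n → Fin N => ‖wordProd A i‖ ^ ((1 - lam) * p₂))
      hconj (fun i _ => by positivity) (fun i _ => by positivity)
    calc S n = ∑ i : Fin n → Fin N,
          ‖wordProd A i‖ ^ (lam * p₁) * ‖wordProd A i‖ ^ ((1 - lam) * p₂) := by
          refine Finset.sum_congr rfl fun i _ => ?_
          rw [← Real.rpow_add_of_nonneg (norm_nonneg _) (by positivity) (by positivity)]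
      _ ≤ (∑ i : Fin n → Fin N, (‖wordProd A i‖ ^ (lam * p₁)) ^ lam⁻¹) ^ (1 / lam⁻¹) *
          (∑ i : Fin n → Fin N, (‖wordProd A i‖ ^ ((1 - lam) * p₂)) ^ (1 - lam)⁻¹)
            ^ (1 / (1 - lam)⁻¹) := this
      _ = S₁ n ^ lam * S₂ n ^ (1 - lam) := by
          rw [one_div, inv_inv, one_div, inv_inv]
          congr 2 <;> refine Finset.sum_congr rfl fun i _ => ?_ <;>
            rw [← Real.rpow_mul (norm_nonneg _)] <;> congr 1 <;> field_simp
  -- limit of RHS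
  have hlim : Tendsto (fun n : ℕ => (S₁ n ^ ((1:ℝ)/n)) ^ lam * (S₂ n ^ ((1:ℝ)/n)) ^ (1 - lam))
      atTop (nhds (r₁ ^ lam * r₂ ^ (1 - lam))) :=
    (hr₁.rpow_const (Or.inr hl0.le)).mul (hr₂.rpow_const (Or.inr hl1'.le))
  have key : r ≤ r₁ ^ lam * r₂ ^ (1 - lam) := by
    refine le_of_tendsto_of_tendsto' hr hlim fun n => ?_
    have h1 : (S₁ n ^ ((1:ℝ)/n)) ^ lam * (S₂ n ^ ((1:ℝ)/n)) ^ (1 - lam)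
        = (S₁ n ^ lam * S₂ n ^ (1 - lam)) ^ ((1:ℝ)/n) := by
      rw [Real.mul_rpow (by positivity) (by positivity),
        ← Real.rpow_mul (hS₁n n), ← Real.rpow_mul (hS₂n n),
        ← Real.rpow_mul (hS₁n n), ← Real.rpow_mul (hS₂n n), mul_comm lam, mul_comm (1-lam)]
    rw [h1]
    exact Real.rpow_le_rpow (Finset.sum_nonneg fun i _ => by positivity) (holder n)
      (by positivity)
  calc Real.log r ≤ Real.log (r₁ ^ lam * r₂ ^ (1 - lam)) := Real.log_le_log hr_pos key
    _ = lam * Real.log r₁ + (1 - lam) * Real.log r₂ := by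
      rw [Real.log_mul (by positivity) (by positivity), Real.log_rpow hr₁_pos,
        Real.log_rpow hr₂_pos]
end

section
/- For positive integers p and nonnegative d×d matrices A_1,…,A_N (all entries ≥ 0), one has the identity ρ_p(A_1,…,A_N) = ρ(∑_{i=1}^N A_i^{⊗p}). -/
open Matrix Filter Kronecker

attribute [local instance] Matrix.linftyOpNormedRing

/-- Index type for the `p`-th Kronecker power of a `d × d` matrix. -/
def KIdx (d : ℕ) : ℕ → Type
  | 0 => Unit
  | p + 1 => Fin d × KIdx d p

instance KIdx.fintype (d : ℕ) : ∀ p, Fintype (KIdx d p)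
  | 0 => inferInstanceAs (Fintype Unit)
  | p + 1 => @instFintypeProd _ _ _ (KIdx.fintype d p)

instance KIdx.decEq (d : ℕ) : ∀ p, DecidableEq (KIdx d p)
  | 0 => inferInstanceAs (DecidableEq Unit)
  | p + 1 => @instDecidableEqProd _ _ _ (KIdx.decEq d p)

/-- The `p`-th Kronecker power `A^{⊗p}`. -/
noncomputable def kronPow {d : ℕ} (A : Matrix (Fin d) (Fin d) ℝ) :
    (p : ℕ) → Matrix (KIdx d p) (KIdx d p) ℝ
  | 0 => 1
  | p + 1 => A ⊗ₖ kronPow A p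



open Finset in
/-- sup of a product over a product type equals product of sups, in `ℝ≥0`. -/
lemma sup_mul_sup_aux {m k : Type*} [Fintype m] [Fintype k]
    (f : m → NNReal) (g : k → NNReal) :
    (Finset.univ : Finset (m × k)).sup (fun q => f q.1 * g q.2) =
      Finset.univ.sup f * Finset.univ.sup g := by
  refine le_antisymm (Finset.sup_le fun q _ =>
    mul_le_mul' (Finset.le_sup (Finset.mem_univ _)) (Finset.le_sup (Finset.mem_univ _))) ?_
  rcases isEmpty_or_nonempty m with hm | hm
  · simp [Finset.univ_eq_empty]
  rcases isEmpty_or_nonempty k with hk | hk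
  · simp [Finset.univ_eq_empty]
  obtain ⟨i, -, hi⟩ := Finset.exists_mem_eq_sup (Finset.univ : Finset m) Finset.univ_nonempty f
  obtain ⟨j, -, hj⟩ := Finset.exists_mem_eq_sup (Finset.univ : Finset k) Finset.univ_nonempty g
  rw [hi, hj]
  exact Finset.le_sup (f := fun q : m × k => f q.1 * g q.2) (Finset.mem_univ (i, j))

lemma nnnorm_kron {m o : Type*} [Fintype m] [DecidableEq m] [Fintype o] [DecidableEq o]
    (A : Matrix m m ℝ) (B : Matrix o o ℝ) : ‖A ⊗ₖ B‖₊ = ‖A‖₊ * ‖B‖₊ := by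
  rw [linfty_opNNNorm_def, linfty_opNNNorm_def, linfty_opNNNorm_def, ← sup_mul_sup_aux]
  congr 1
  funext q
  calc ∑ j : m × o, ‖(A ⊗ₖ B) q j‖₊
      = ∑ j : m, ∑ t : o, ‖A q.1 j‖₊ * ‖B q.2 t‖₊ := by
        rw [Fintype.sum_prod_type]
        simp [Matrix.kroneckerMap_apply, nnnorm_mul]
    _ = (∑ j : m, ‖A q.1 j‖₊) * ∑ t : o, ‖B q.2 t‖₊ := by
        rw [Finset.sum_mul]
        exact Finset.sum_congr rfl fun j _ => (Finset.mul_sum _ _ _).symm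

/-- nnnorm of an entrywise-nonneg entry sum. -/
lemma nnnorm_sum_of_nonneg {ι : Type*} (s : Finset ι) (f : ι → ℝ) (h : ∀ j ∈ s, 0 ≤ f j) :
    ‖∑ j ∈ s, f j‖₊ = ∑ j ∈ s, ‖f j‖₊ := by
  apply NNReal.coe_injective
  push_cast [coe_nnnorm, Real.norm_eq_abs]
  rw [abs_of_nonneg (Finset.sum_nonneg h)]
  exact Finset.sum_congr rfl fun j hj => (abs_of_nonneg (h j hj)).symm

/-- For entrywise nonneg matrices, sum of norms ≤ card · norm of sum. -/
lemma sum_nnnorm_le_card_mul_nnnorm {ι m : Type*} [Fintype ι] [Fintype m] [DecidableEq m]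
    (M : ι → Matrix m m ℝ) (h : ∀ j i k, 0 ≤ M j i k) :
    ∑ j, ‖M j‖₊ ≤ (Fintype.card m : NNReal) * ‖∑ j, M j‖₊ := by
  have hrow : ∀ i, ∑ k, ‖(∑ j, M j) i k‖₊ = ∑ j, ∑ k, ‖M j i k‖₊ := by
    intro i
    rw [Finset.sum_comm]
    refine Finset.sum_congr rfl fun k _ => ?_
    rw [show (∑ j, M j) i k = ∑ j, M j i k by simp [Matrix.sum_apply]]
    exact nnnorm_sum_of_nonneg Finset.univ (fun j => M j i k) fun j _ => h j i k
  calc ∑ j, ‖M j‖₊ ≤ ∑ j : ι, ∑ i : m, ∑ k : m, ‖M j i k‖₊ := by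
        refine Finset.sum_le_sum fun j _ => ?_
        rw [linfty_opNNNorm_def]
        exact Finset.sup_le fun i _ =>
          Finset.single_le_sum (f := fun i => ∑ k, ‖M j i k‖₊)
            (fun _ _ => zero_le) (Finset.mem_univ i)
    _ = ∑ i : m, ∑ k : m, ‖(∑ j, M j) i k‖₊ := by
        rw [Finset.sum_comm]
        exact Finset.sum_congr rfl fun i _ => (hrow i).symm
    _ ≤ ∑ _i : m, ‖∑ j, M j‖₊ := by
        refine Finset.sum_le_sum fun i _ => ?_
        rw [linfty_opNNNorm_def]
        exact Finset.le_sup (f := fun i => ∑ k, ‖(∑ j, M j) i k‖₊) (Finset.mem_univ i)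
    _ = (Fintype.card m : NNReal) * ‖∑ j, M j‖₊ := by
        rw [Finset.sum_const, Finset.card_univ, nsmul_eq_mul]

lemma kronPow_one_eq (d p : ℕ) :
    kronPow (1 : Matrix (Fin d) (Fin d) ℝ) p = 1 := by
  induction p with
  | zero => rfl
  | succ p ih => show (1 : Matrix (Fin d) (Fin d) ℝ) ⊗ₖ kronPow 1 p = 1; rw [ih,
      Matrix.one_kronecker_one]

lemma kronPow_mul {d : ℕ} (M L : Matrix (Fin d) (Fin d) ℝ) (p : ℕ) :
    kronPow (M * L) p = kronPow M p * kronPow L p := by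
  induction p with
  | zero => show (1 : Matrix (KIdx d 0) (KIdx d 0) ℝ) = 1 * 1; rw [one_mul]
  | succ p ih =>
      show (M * L) ⊗ₖ kronPow (M * L) p = (M ⊗ₖ kronPow M p) * (L ⊗ₖ kronPow L p)
      rw [ih, Matrix.mul_kronecker_mul]

lemma nnnorm_kronPow_zero {d : ℕ} (M : Matrix (Fin d) (Fin d) ℝ) :
    ‖kronPow M 0‖₊ = 1 := by
  show ‖(1 : Matrix (KIdx d 0) (KIdx d 0) ℝ)‖₊ = 1
  rw [linfty_opNNNorm_def]
  have : (Finset.univ : Finset (KIdx d 0)) = {()} := rfl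
  rw [this]
  simp [Matrix.one_apply]
  show (({()} : Finset Unit).sup fun i => ∑ j ∈ ({()} : Finset Unit), ‖if i = j then (1:ℝ) else 0‖₊) = 1
  simp

lemma nnnorm_kronPow {d : ℕ} (M : Matrix (Fin d) (Fin d) ℝ) (p : ℕ) :
    ‖kronPow M p‖₊ = ‖M‖₊ ^ p := by
  induction p with
  | zero => rw [nnnorm_kronPow_zero, pow_zero]
  | succ p ih =>
      show ‖M ⊗ₖ kronPow M p‖₊ = ‖M‖₊ ^ (p + 1)
      rw [nnnorm_kron, ih, pow_succ, mul_comm]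

lemma kronPow_nonneg {d : ℕ} (M : Matrix (Fin d) (Fin d) ℝ) (hM : ∀ i k, 0 ≤ M i k) (p : ℕ) :
    ∀ i k, 0 ≤ kronPow M p i k := by
  induction p with
  | zero =>
      intro i k
      show (0:ℝ) ≤ (1 : Matrix (KIdx d 0) (KIdx d 0) ℝ) i k
      rw [Matrix.one_apply]
      split <;> norm_num
  | succ p ih =>
      rintro ⟨i1, i2⟩ ⟨k1, k2⟩
      show (0:ℝ) ≤ (M ⊗ₖ kronPow M p) (i1, i2) (k1, k2)
      rw [Matrix.kroneckerMap_apply]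
      exact mul_nonneg (hM i1 k1) (ih i2 k2)

lemma matmul_nonneg {m : Type*} [Fintype m] (M L : Matrix m m ℝ)
    (hM : ∀ i k, 0 ≤ M i k) (hL : ∀ i k, 0 ≤ L i k) : ∀ i k, 0 ≤ (M * L) i k := by
  intro i k
  rw [Matrix.mul_apply]
  exact Finset.sum_nonneg fun j _ => mul_nonneg (hM i j) (hL j k)

lemma wordProd_succ {d N n : ℕ} (A : Fin N → Matrix (Fin d) (Fin d) ℝ)
    (j : Fin (n + 1) → Fin N) :
    wordProd A j = wordProd A (fun k => j k.succ) * A (j 0) := by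
  unfold wordProd
  rw [List.ofFn_succ']
  rw [List.concat_eq_append, List.prod_append, List.prod_singleton]
  congr 1
  · exact congrArg List.prod (congrArg List.ofFn (funext fun k => by rw [Fin.rev_castSucc]))
  · rw [Fin.rev_last]


lemma wordProd_zero {d N : ℕ} (A : Fin N → Matrix (Fin d) (Fin d) ℝ) (i : Fin 0 → Fin N) :
    wordProd A i = 1 := by
  unfold wordProd
  simp

lemma wordProd_nonneg {d N : ℕ} (A : Fin N → Matrix (Fin d) (Fin d) ℝ)
    (hA : ∀ i j k, 0 ≤ A i j k) :
    ∀ {n : ℕ} (i : Fin n → Fin N) (a b : Fin d), 0 ≤ wordProd A i a b := by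
  intro n
  induction n with
  | zero =>
      intro i a b
      rw [wordProd_zero]
      rw [Matrix.one_apply]
      split <;> norm_num
  | succ n ih =>
      intro i a b
      rw [wordProd_succ]
      exact matmul_nonneg _ _ (ih _) (hA _) a b

lemma sum_kronPow_pow {d N : ℕ} (A : Fin N → Matrix (Fin d) (Fin d) ℝ) (p : ℕ) :
    ∀ n : ℕ, (∑ a : Fin N, kronPow (A a) p) ^ n
      = ∑ i : Fin n → Fin N, kronPow (wordProd A i) p
  | 0 => by
      rw [pow_zero, Fintype.sum_unique, wordProd_zero, kronPow_one_eq]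
  | n + 1 => by
      rw [pow_succ, sum_kronPow_pow A p n, Finset.sum_mul_sum, Finset.sum_comm,
        ← Fintype.sum_prod_type']
      refine Fintype.sum_equiv (Fin.consEquiv fun _ => Fin N) _ _ fun q => ?_
      rw [← kronPow_mul]
      rw [wordProd_succ A (Fin.consEquiv (fun _ => Fin N) q)]
      simp [Fin.consEquiv]

/-- for a positive integer `p` and nonnegative matrices,
`ρ_p(A_1,…,A_N) = ρ(∑_{i=1}^N A_i^{⊗p})`, where the spectral radius of the
matrix `B = ∑ A_i^{⊗p}` is realised as `lim_n ‖B^n‖^{1/n}`. -/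
theorem stmt7 {d N : ℕ} (A : Fin N → Matrix (Fin d) (Fin d) ℝ)
    (hA : ∀ i j k, 0 ≤ A i j k)
    (p : ℕ) (hp : 1 ≤ p) (r s : ℝ)
    (hr : Tendsto
      (fun n : ℕ => (∑ i : Fin n → Fin N, ‖wordProd A i‖ ^ (p : ℝ)) ^ ((1 : ℝ) / n))
      atTop (nhds r))
    (hs : Tendsto
      (fun n : ℕ => ‖(∑ i : Fin N, kronPow (A i) p) ^ n‖ ^ ((1 : ℝ) / n))
      atTop (nhds s)) :
    r = s := by
  set B : Matrix (KIdx d p) (KIdx d p) ℝ := ∑ a : Fin N, kronPow (A a) p with hB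
  set C : ℝ := (Fintype.card (KIdx d p) : ℝ) + 1 with hC
  have hCpos : 0 < C := by positivity
  -- rewrite the word sum as a sum of norms of Kronecker powers
  have hnormkron : ∀ (M : Matrix (Fin d) (Fin d) ℝ), ‖kronPow M p‖ = ‖M‖ ^ p := by
    intro M
    have := congrArg NNReal.toReal (nnnorm_kronPow M p)
    simpa [coe_nnnorm] using this
  have haseq : ∀ n : ℕ, (∑ i : Fin n → Fin N, ‖wordProd A i‖ ^ (p : ℝ))
      = ∑ i : Fin n → Fin N, ‖kronPow (wordProd A i) p‖ := by
    intro n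
    refine Finset.sum_congr rfl fun i _ => ?_
    rw [Real.rpow_natCast, hnormkron]
  have hanonneg : ∀ n : ℕ, 0 ≤ ∑ i : Fin n → Fin N, ‖wordProd A i‖ ^ (p : ℝ) :=
    fun n => Finset.sum_nonneg fun i _ => Real.rpow_nonneg (norm_nonneg _) _
  have hba : ∀ n : ℕ, ‖B ^ n‖ ≤ ∑ i : Fin n → Fin N, ‖wordProd A i‖ ^ (p : ℝ) := by
    intro n
    rw [haseq, hB, sum_kronPow_pow]
    exact norm_sum_le _ _
  have hab : ∀ n : ℕ, (∑ i : Fin n → Fin N, ‖wordProd A i‖ ^ (p : ℝ)) ≤ C * ‖B ^ n‖ := by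
    intro n
    have key := sum_nnnorm_le_card_mul_nnnorm (fun i : Fin n → Fin N => kronPow (wordProd A i) p)
      (fun i => kronPow_nonneg _ (wordProd_nonneg A hA i) p)
    have key' : (∑ i : Fin n → Fin N, ‖kronPow (wordProd A i) p‖)
        ≤ (Fintype.card (KIdx d p) : ℝ) * ‖∑ i : Fin n → Fin N, kronPow (wordProd A i) p‖ := by
      have := NNReal.coe_le_coe.mpr key
      push_cast at this
      simpa [coe_nnnorm] using this
    rw [haseq, hB, sum_kronPow_pow]
    calc (∑ i : Fin n → Fin N, ‖kronPow (wordProd A i) p‖)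
        ≤ (Fintype.card (KIdx d p) : ℝ) * ‖∑ i : Fin n → Fin N, kronPow (wordProd A i) p‖ := key'
      _ ≤ C * ‖∑ i : Fin n → Fin N, kronPow (wordProd A i) p‖ := by
          have : ((Fintype.card (KIdx d p) : ℝ)) ≤ C := by rw [hC]; linarith
          exact mul_le_mul_of_nonneg_right this (norm_nonneg _)
  -- s ≤ r
  have hsr : s ≤ r := by
    refine le_of_tendsto_of_tendsto' hs hr fun n => ?_
    exact Real.rpow_le_rpow (norm_nonneg _) (hba n) (by positivity)
  -- r ≤ s
  have hC1 : Tendsto (fun n : ℕ => C ^ ((1 : ℝ) / n)) atTop (nhds 1) := by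
    have h0 : Tendsto (fun n : ℕ => (1 : ℝ) / n) atTop (nhds 0) :=
      tendsto_one_div_atTop_nhds_zero_nat
    have := (tendsto_const_nhds (x := C) (f := atTop (α := ℕ))).rpow h0 (Or.inl hCpos.ne')
    simpa using this
  have hrs : r ≤ s := by
    have hmul : Tendsto (fun n : ℕ => C ^ ((1 : ℝ) / n) * ‖B ^ n‖ ^ ((1 : ℝ) / n))
        atTop (nhds (1 * s)) := hC1.mul hs
    rw [one_mul] at hmul
    refine le_of_tendsto_of_tendsto' hr hmul fun n => ?_
    calc (∑ i : Fin n → Fin N, ‖wordProd A i‖ ^ (p : ℝ)) ^ ((1 : ℝ) / n)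
        ≤ (C * ‖B ^ n‖) ^ ((1 : ℝ) / n) :=
          Real.rpow_le_rpow (hanonneg n) (hab n) (by positivity)
      _ = C ^ ((1 : ℝ) / n) * ‖B ^ n‖ ^ ((1 : ℝ) / n) :=
          Real.mul_rpow hCpos.le (norm_nonneg _)
  linarith
end

section
/- Suppose (s_k)_{k≥1} is a sequence of nonnegative reals with s_k ≤ C exp(−γ k^{1/(d−1)}) for constants C, γ > 0 and integer d ≥ 2. Then there exist constants C', γ' > 0 such that for every n ≥ 1, ∑_{i_1 < i_2 < ⋯ < i_n} s_{i_1} s_{i_2} ⋯ s_{i_n} ≤ C'^n exp(−γ' n^{d/(d−1)}), where the sum is over all strictly increasing n-tuples of positive integers. -/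
lemma aux_sum_inv_sq (M : ℕ) : ∑ i ∈ Finset.range M, (1:ℝ)/((i:ℝ)+1)^2 ≤ 2 := by
  have h : ∀ M : ℕ, ∑ i ∈ Finset.range M, (1:ℝ)/((i:ℝ)+1)^2 ≤ 2 - 2/((M:ℝ)+1) := by
    intro M
    induction M with
    | zero => norm_num
    | succ M ih =>
      rw [Finset.sum_range_succ]
      push_cast
      have h1 : (0:ℝ) < (M:ℝ)+1 := by positivity
      have h2 : (0:ℝ) < (M:ℝ)+1+1 := by positivity
      have key : (1:ℝ)/((M:ℝ)+1)^2 ≤ 2/((M:ℝ)+1) - 2/((M:ℝ)+1+1) := by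
        rw [div_sub_div _ _ (ne_of_gt h1) (ne_of_gt h2), div_le_div_iff₀ (by positivity) (by positivity)]
        nlinarith
      linarith
  have := h M
  have h1 : (0:ℝ) < 2/((M:ℝ)+1) := by positivity
  linarith

lemma aux_pow_le_exp {x : ℝ} (hx : 0 ≤ x) (m : ℕ) : x ^ m / m.factorial ≤ Real.exp x := by
  refine le_trans ?_ (Real.sum_le_exp_of_nonneg hx (m+1))
  refine Finset.single_le_sum (f := fun i => x ^ i / i.factorial) (fun i _ => by positivity) ?_
  simp

lemma aux_fin_lb {n : ℕ} {f : Fin n → ℕ} (hf : StrictMono f) (h1 : ∀ k, 1 ≤ f k) :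
    ∀ k : Fin n, k.1 + 1 ≤ f k := by
  suffices h : ∀ j, ∀ k : Fin n, k.1 = j → j + 1 ≤ f k by
    intro k; exact h k.1 k rfl
  intro j
  induction j with
  | zero => intro k _; exact h1 k
  | succ j ih =>
    intro k hk
    have hjn : j < n := by omega
    have hlt : (⟨j, by omega⟩ : Fin n) < k := by
      simp [Fin.lt_def, hk]
    have h2 := hf hlt
    have h3 := ih ⟨j, by omega⟩ rfl
    omega

noncomputable def stmt10g (c α : ℝ) (i : ℕ) : ℝ :=
  if 1 ≤ i then Real.exp (-c * (i:ℝ) ^ α) else 0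

set_option maxHeartbeats 1000000 in
/-- superexponential bound on sums over strictly increasing tuples
of products of a stretched-exponentially decaying sequence. -/
theorem stmt10 (d : ℕ) (hd : 2 ≤ d) (s : ℕ → ℝ) (hs : ∀ k, 0 ≤ s k)
    (C γ : ℝ) (hC : 0 < C) (hγ : 0 < γ)
    (hbound : ∀ k : ℕ, 1 ≤ k →
      s k ≤ C * Real.exp (-γ * (k : ℝ) ^ ((1 : ℝ) / ((d : ℝ) - 1)))) :
    ∃ C' γ' : ℝ, 0 < C' ∧ 0 < γ' ∧ ∀ n : ℕ, 1 ≤ n →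
      (∑' i : {f : Fin n → ℕ // StrictMono f ∧ ∀ k, 1 ≤ f k},
          ∏ k : Fin n, s (i.1 k)) ≤
        C' ^ n * Real.exp (-γ' * (n : ℝ) ^ ((d : ℝ) / ((d : ℝ) - 1))) := by
  have hd2 : (2:ℝ) ≤ (d:ℝ) := by exact_mod_cast hd
  have hd1 : (1:ℝ) ≤ (d:ℝ) - 1 := by linarith
  have hd0 : (0:ℝ) < (d:ℝ) - 1 := by linarith
  set α : ℝ := 1 / ((d:ℝ) - 1) with hαdef
  have hα0 : 0 < α := by positivity
  have hα1 : α ≤ 1 := by rw [hαdef, div_le_one hd0]; exact hd1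
  have hexp_eq : (d:ℝ) / ((d:ℝ) - 1) = 1 + α := by
    rw [hαdef]; field_simp; ring
  set c : ℝ := γ / 2 with hcdef
  have hc0 : 0 < c := by positivity
  set m : ℕ := 2 * (d - 1) with hmdef
  set B : ℝ := (m.factorial : ℝ) / c ^ m with hBdef
  have hB0 : 0 < B := by positivity
  set S : ℝ := 8 * B with hSdef
  have hS0 : 0 < S := by positivity
  set g : ℕ → ℝ := stmt10g c α with hgdef
  have hg_nonneg : ∀ i, 0 ≤ g i := by
    intro i; rw [hgdef]; unfold stmt10g; split <;> positivity
  -- α * m = 2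
  have hαm : α * (m:ℝ) = 2 := by
    rw [hαdef, hmdef]
    have : ((2 * (d-1) : ℕ) : ℝ) = 2 * ((d:ℝ) - 1) := by
      push_cast [Nat.cast_sub (by omega : 1 ≤ d)]; ring
    rw [this]; field_simp
  -- pointwise bound on g
  have hgB : ∀ i : ℕ, g i ≤ 4 * B / ((i:ℝ)+1)^2 := by
    intro i
    rcases Nat.eq_zero_or_pos i with h0 | h1
    · subst h0; simp [hgdef]; positivity
    · have hi1 : (1:ℝ) ≤ (i:ℝ) := by exact_mod_cast h1
      have hipos : (0:ℝ) < (i:ℝ) := by linarith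
      have h1' : 1 ≤ i := h1
      have hgi : g i = Real.exp (-(c * (i:ℝ) ^ α)) := by
        rw [hgdef]; unfold stmt10g; rw [if_pos h1', neg_mul]
      have hx : 0 < c * (i:ℝ) ^ α := by positivity
      have hpow := aux_pow_le_exp hx.le m
      -- (c * i^α)^m = c^m * i^2
      have hiam : ((i:ℝ) ^ α) ^ m = (i:ℝ) ^ 2 := by
        rw [← Real.rpow_natCast ((i:ℝ) ^ α) m, ← Real.rpow_mul hipos.le, hαm,
          Real.rpow_two]
      have hxm : (c * (i:ℝ) ^ α) ^ m = c ^ m * (i:ℝ)^2 := by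
        rw [mul_pow, hiam]
      have hxm0 : 0 < (c * (i:ℝ) ^ α) ^ m / m.factorial := by positivity
      have h2 : Real.exp (-(c * (i:ℝ) ^ α)) ≤ (m.factorial : ℝ) / (c ^ m * (i:ℝ)^2) := by
        rw [Real.exp_neg]
        have := inv_anti₀ hxm0 hpow
        calc (Real.exp (c * (i:ℝ) ^ α))⁻¹ ≤ ((c * (i:ℝ) ^ α) ^ m / m.factorial)⁻¹ := this
          _ = (m.factorial : ℝ) / (c ^ m * (i:ℝ)^2) := by rw [inv_div, hxm]
      have h3 : (m.factorial : ℝ) / (c ^ m * (i:ℝ)^2) = B / (i:ℝ)^2 := by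
        rw [hBdef]; field_simp
      have h4 : B / (i:ℝ)^2 ≤ 4 * B / ((i:ℝ)+1)^2 := by
        rw [div_le_div_iff₀ (by positivity) (by positivity)]
        nlinarith [mul_le_mul_of_nonneg_left (by nlinarith : ((i:ℝ)+1)^2 ≤ 4*(i:ℝ)^2) hB0.le]
      rw [hgi]; rw [h3] at h2; linarith
  -- finite sums of g are bounded by S
  have hSsum : ∀ t : Finset ℕ, ∑ i ∈ t, g i ≤ S := by
    intro t
    set M : ℕ := t.sup id + 1 with hMdef
    have hsub : t ⊆ Finset.range M := by
      intro i hi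
      exact Finset.mem_range.2 (Nat.lt_succ_of_le (Finset.le_sup (f := id) hi))
    calc ∑ i ∈ t, g i ≤ ∑ i ∈ Finset.range M, g i :=
          Finset.sum_le_sum_of_subset_of_nonneg hsub (fun i _ _ => hg_nonneg i)
      _ ≤ ∑ i ∈ Finset.range M, 4 * B / ((i:ℝ)+1)^2 :=
          Finset.sum_le_sum (fun i _ => hgB i)
      _ = 4 * B * ∑ i ∈ Finset.range M, (1:ℝ)/((i:ℝ)+1)^2 := by
          rw [Finset.mul_sum]; congr 1; funext i; ring
      _ ≤ 4 * B * 2 := by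
          have := aux_sum_inv_sq M
          nlinarith
      _ = S := by rw [hSdef]; ring
  refine ⟨C * S + 1, γ / 8, by positivity, by positivity, ?_⟩
  intro n hn
  rw [hexp_eq]
  set R : ℝ := (C * S + 1) ^ n * Real.exp (-(γ/8) * (n:ℝ) ^ ((1:ℝ) + α)) with hRdef
  have hR0 : 0 ≤ R := by positivity
  apply tsum_le_of_sum_le' hR0
  intro u
  -- the deterministic prefactor
  set P : ℝ := ∏ k : Fin n, Real.exp (-c * (((k:ℕ):ℝ)+1) ^ α) with hPdef
  have hP0 : 0 ≤ P := by positivity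
  -- pointwise bound
  have hpt : ∀ x : {f : Fin n → ℕ // StrictMono f ∧ ∀ k, 1 ≤ f k},
      ∏ k : Fin n, s (x.1 k) ≤ C ^ n * P * ∏ k : Fin n, g (x.1 k) := by
    rintro ⟨f, hmono, h1⟩
    have hlb := aux_fin_lb hmono h1
    have hterm : ∀ k : Fin n,
        s (f k) ≤ C * (Real.exp (-c * (((k:ℕ):ℝ)+1) ^ α) * g (f k)) := by
      intro k
      have h1k : 1 ≤ f k := h1 k
      have hgfk : g (f k) = Real.exp (-c * ((f k : ℕ):ℝ) ^ α) := by
        rw [hgdef]; unfold stmt10g; rw [if_pos h1k]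
      have hcast : (((k:ℕ):ℝ)+1) ≤ ((f k : ℕ):ℝ) := by
        have := hlb k; exact_mod_cast this
      have hrpow : (((k:ℕ):ℝ)+1) ^ α ≤ ((f k : ℕ):ℝ) ^ α :=
        Real.rpow_le_rpow (by positivity) hcast hα0.le
      calc s (f k) ≤ C * Real.exp (-γ * ((f k : ℕ):ℝ) ^ α) := hbound _ h1k
        _ = C * (Real.exp (-c * ((f k : ℕ):ℝ) ^ α) * Real.exp (-c * ((f k : ℕ):ℝ) ^ α)) := by
            rw [← Real.exp_add]
            have hh : -c * ((f k : ℕ):ℝ) ^ α + -c * ((f k : ℕ):ℝ) ^ α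
                = -γ * ((f k : ℕ):ℝ) ^ α := by rw [hcdef]; ring
            rw [hh]
        _ ≤ C * (Real.exp (-c * (((k:ℕ):ℝ)+1) ^ α) * g (f k)) := by
            rw [hgfk]
            have hle : Real.exp (-c * ((f k : ℕ):ℝ) ^ α)
                ≤ Real.exp (-c * (((k:ℕ):ℝ)+1) ^ α) := by
              apply Real.exp_le_exp.2
              nlinarith [mul_le_mul_of_nonneg_left hrpow hc0.le]
            exact mul_le_mul_of_nonneg_left
              (mul_le_mul_of_nonneg_right hle (Real.exp_pos _).le) hC.le
    calc ∏ k : Fin n, s (f k)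
        ≤ ∏ k : Fin n, (C * (Real.exp (-c * (((k:ℕ):ℝ)+1) ^ α) * g (f k))) :=
          Finset.prod_le_prod (fun k _ => hs _) (fun k _ => hterm k)
      _ = C ^ n * P * ∏ k : Fin n, g (f k) := by
          rw [Finset.prod_mul_distrib, Finset.prod_mul_distrib, Finset.prod_const, hPdef]
          simp [Finset.card_univ, mul_assoc]
  -- sum of products of g over u is at most S^n
  have hGsum : ∑ x ∈ u, ∏ k : Fin n, g (x.1 k) ≤ S ^ n := by
    classical
    set t : Finset ℕ := u.biUnion (fun x => Finset.image x.1 Finset.univ) with htdef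
    have himage : ∑ x ∈ u, ∏ k : Fin n, g (x.1 k)
        = ∑ f ∈ u.image Subtype.val, ∏ k : Fin n, g (f k) := by
      rw [Finset.sum_image]
      intro x _ y _ hxy
      exact Subtype.ext hxy
    have hsub : u.image Subtype.val ⊆ Fintype.piFinset (fun _ : Fin n => t) := by
      intro f hf
      rw [Finset.mem_image] at hf
      obtain ⟨x, hx, rfl⟩ := hf
      rw [Fintype.mem_piFinset]
      intro k
      rw [htdef, Finset.mem_biUnion]
      exact ⟨x, hx, Finset.mem_image_of_mem _ (Finset.mem_univ k)⟩
    calc ∑ x ∈ u, ∏ k : Fin n, g (x.1 k)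
        = ∑ f ∈ u.image Subtype.val, ∏ k : Fin n, g (f k) := himage
      _ ≤ ∑ f ∈ Fintype.piFinset (fun _ : Fin n => t), ∏ k : Fin n, g (f k) :=
          Finset.sum_le_sum_of_subset_of_nonneg hsub
            (fun f _ _ => Finset.prod_nonneg (fun k _ => hg_nonneg _))
      _ = ∏ _k : Fin n, ∑ i ∈ t, g i := by
          rw [Finset.prod_univ_sum]
      _ = (∑ i ∈ t, g i) ^ n := by
          rw [Finset.prod_const, Finset.card_univ, Fintype.card_fin]
      _ ≤ S ^ n := by
          apply pow_le_pow_left₀ (Finset.sum_nonneg (fun i _ => hg_nonneg i)) (hSsum t)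
  -- bound P
  have hPbound : P ≤ Real.exp (-(γ/8) * (n:ℝ) ^ ((1:ℝ) + α)) := by
    have hPexp : P = Real.exp (∑ k : Fin n, (-c * (((k:ℕ):ℝ)+1) ^ α)) := by
      rw [hPdef, Real.exp_sum]
    have hsum_eq : ∑ k : Fin n, (-c * (((k:ℕ):ℝ)+1) ^ α)
        = -c * ∑ k ∈ Finset.range n, (((k:ℕ):ℝ)+1) ^ α := by
      rw [Finset.mul_sum]
      exact Fin.sum_univ_eq_sum_range (fun k => -c * (((k:ℕ):ℝ)+1) ^ α) n
    -- lower bound on the exponent sum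
    have hSig : (n:ℝ) ^ ((1:ℝ)+α) / 4 ≤ ∑ k ∈ Finset.range n, (((k:ℕ):ℝ)+1) ^ α := by
      have hn2 : ∀ k ∈ Finset.Ico (n/2) n, ((n:ℝ)/2) ^ α ≤ (((k:ℕ):ℝ)+1) ^ α := by
        intro k hk
        apply Real.rpow_le_rpow (by positivity) _ hα0.le
        have hk1 := (Finset.mem_Ico.1 hk).1
        have : (n:ℝ) ≤ 2 * (k:ℝ) + 2 := by
          have : n ≤ 2 * k + 2 := by omega
          exact_mod_cast this
        linarith
      have hsubset : Finset.Ico (n/2) n ⊆ Finset.range n := by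
        rw [Finset.range_eq_Ico]
        exact Finset.Ico_subset_Ico (Nat.zero_le _) le_rfl
      have hcard : ((n - n/2 : ℕ) : ℝ) * ((n:ℝ)/2) ^ α
          ≤ ∑ k ∈ Finset.Ico (n/2) n, (((k:ℕ):ℝ)+1) ^ α := by
        calc ((n - n/2 : ℕ) : ℝ) * ((n:ℝ)/2) ^ α
            = ∑ _k ∈ Finset.Ico (n/2) n, ((n:ℝ)/2) ^ α := by
              rw [Finset.sum_const, Nat.card_Ico, nsmul_eq_mul]
          _ ≤ _ := Finset.sum_le_sum hn2
      have hhalf : (n:ℝ)/2 ≤ ((n - n/2 : ℕ) : ℝ) := by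
        have : n ≤ 2 * (n - n/2) := by omega
        have h := (Nat.cast_le (α := ℝ)).2 this
        push_cast at h
        linarith
      have hmono : ((n:ℝ)/2) * ((n:ℝ)/2) ^ α ≤ ((n - n/2 : ℕ) : ℝ) * ((n:ℝ)/2) ^ α := by
        apply mul_le_mul_of_nonneg_right hhalf (by positivity)
      have hrw : ((n:ℝ)/2) * ((n:ℝ)/2) ^ α = (n:ℝ) ^ ((1:ℝ)+α) / 2 ^ ((1:ℝ)+α) := by
        have hnpos : (0:ℝ) < (n:ℝ)/2 := by
          have : (1:ℝ) ≤ (n:ℝ) := by exact_mod_cast hn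
          linarith
        rw [← Real.div_rpow (by positivity) (by norm_num : (0:ℝ) ≤ 2),
          Real.rpow_add hnpos, Real.rpow_one]
      have h24 : (2:ℝ) ^ ((1:ℝ)+α) ≤ 4 := by
        have : (2:ℝ) ^ ((1:ℝ)+α) ≤ 2 ^ (2:ℝ) :=
          Real.rpow_le_rpow_of_exponent_le (by norm_num) (by linarith)
        have h4 : (2:ℝ) ^ (2:ℝ) = 4 := by
          rw [Real.rpow_two]; norm_num
        linarith
      have hdiv : (n:ℝ) ^ ((1:ℝ)+α) / 4 ≤ (n:ℝ) ^ ((1:ℝ)+α) / 2 ^ ((1:ℝ)+α) := by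
        apply div_le_div_of_nonneg_left (by positivity) (by positivity) h24
      have hfinal : ∑ k ∈ Finset.Ico (n/2) n, (((k:ℕ):ℝ)+1) ^ α
          ≤ ∑ k ∈ Finset.range n, (((k:ℕ):ℝ)+1) ^ α :=
        Finset.sum_le_sum_of_subset_of_nonneg hsubset (fun i _ _ => by positivity)
      calc (n:ℝ) ^ ((1:ℝ)+α) / 4 ≤ (n:ℝ) ^ ((1:ℝ)+α) / 2 ^ ((1:ℝ)+α) := hdiv
        _ = ((n:ℝ)/2) * ((n:ℝ)/2) ^ α := hrw.symm
        _ ≤ ((n - n/2 : ℕ) : ℝ) * ((n:ℝ)/2) ^ α := hmono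
        _ ≤ ∑ k ∈ Finset.Ico (n/2) n, (((k:ℕ):ℝ)+1) ^ α := hcard
        _ ≤ ∑ k ∈ Finset.range n, (((k:ℕ):ℝ)+1) ^ α := hfinal
    rw [hPexp, hsum_eq]
    apply Real.exp_le_exp.2
    have h := mul_le_mul_of_nonneg_left hSig hc0.le
    simp only [hcdef] at h ⊢
    nlinarith [h]
  -- put everything together
  calc ∑ x ∈ u, ∏ k : Fin n, s (x.1 k)
      ≤ ∑ x ∈ u, (C ^ n * P * ∏ k : Fin n, g (x.1 k)) :=
        Finset.sum_le_sum (fun x _ => hpt x)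
    _ = C ^ n * P * ∑ x ∈ u, ∏ k : Fin n, g (x.1 k) := by
        rw [Finset.mul_sum]
    _ ≤ C ^ n * P * S ^ n := by
        apply mul_le_mul_of_nonneg_left hGsum (by positivity)
    _ = (C * S) ^ n * P := by rw [mul_pow]; ring
    _ ≤ R := by
        rw [hRdef]
        apply mul_le_mul _ hPbound hP0 (by positivity)
        exact pow_le_pow_left₀ (by positivity) (by linarith) n
end
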